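/- Let G = ([n], E) be a graph and e = {1,2} ∈ E. Consider the standard quadratic program min{x^T(I + A_G + A_{G\e})x : x ∈ Δ_n}. Then this program has infinitely many global minimizers if and only if e is a critical edge of G. -/

import Mathlib

open Matrix Finset
open scoped Classical

def IsStable {n : ℕ} (G : SimpleGraph (Fin n)) (S : Finset (Fin n)) : Prop :=
  ∀ i ∈ S, ∀ j ∈ S, ¬ G.Adj i j

noncomputable def alpha {n : ℕ} (G : SimpleGraph (Fin n)) : ℕ :=
  sSup {k | ∃ S : Finset (Fin n), IsStable G S ∧ S.card = k}

noncomputable def indic {n : ℕ} (S : Finset (Fin n)) : Fin n → ℝ :=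
  fun i => if i ∈ S then 1 else 0

noncomputable def qform {n : ℕ} (M : Matrix (Fin n) (Fin n) ℝ) (x : Fin n → ℝ) : ℝ :=
  x ⬝ᵥ M.mulVec x

noncomputable def fG {n : ℕ} (G : SimpleGraph (Fin n)) (x : Fin n → ℝ) : ℝ :=
  qform (1 + G.adjMatrix ℝ) x

noncomputable def globMin {n : ℕ} (f : (Fin n → ℝ) → ℝ) : Set (Fin n → ℝ) :=
  {x | x ∈ stdSimplex ℝ (Fin n) ∧ ∀ y ∈ stdSimplex ℝ (Fin n), f x ≤ f y}

section Aux

variable {m : ℕ}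

lemma dv_eq (M : Matrix (Fin m) (Fin m) ℝ) (u v : Fin m → ℝ) :
    u ⬝ᵥ M.mulVec v = ∑ a, ∑ b, u a * M a b * v b := by
  simp [dotProduct, Matrix.mulVec, Finset.mul_sum, mul_assoc]

lemma qform_eq (M : Matrix (Fin m) (Fin m) ℝ) (x : Fin m → ℝ) :
    qform M x = ∑ a, ∑ b, x a * M a b * x b := dv_eq M x x

lemma q_add (A B : Matrix (Fin m) (Fin m) ℝ) (x : Fin m → ℝ) :
    qform (A + B) x = qform A x + qform B x := by
  simp [qform, Matrix.add_mulVec, dotProduct_add]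

lemma q_one (x : Fin m → ℝ) : qform 1 x = ∑ i, x i ^ 2 := by
  simp [qform, Matrix.one_mulVec, dotProduct, sq]

noncomputable def qA (G : SimpleGraph (Fin m)) (x : Fin m → ℝ) : ℝ :=
  ∑ i, ∑ j, if G.Adj i j then x i * x j else 0

lemma q_adj (G : SimpleGraph (Fin m)) (x : Fin m → ℝ) :
    qform (G.adjMatrix ℝ) x = qA G x := by
  rw [qform_eq, qA]
  refine Finset.sum_congr rfl fun a _ => Finset.sum_congr rfl fun b _ => ?_
  by_cases h : G.Adj a b <;> simp [h]

lemma q_one_adj (G : SimpleGraph (Fin m)) (x : Fin m → ℝ) :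
    qform (1 + G.adjMatrix ℝ) x = (∑ i, x i ^ 2) + qA G x := by
  rw [q_add, q_one, q_adj]

lemma qA_nonneg (G : SimpleGraph (Fin m)) {x : Fin m → ℝ} (hx : ∀ i, 0 ≤ x i) :
    0 ≤ qA G x := by
  refine Finset.sum_nonneg fun i _ => Finset.sum_nonneg fun j _ => ?_
  by_cases h : G.Adj i j <;> simp [h]
  exact mul_nonneg (hx i) (hx j)

lemma qA_eq_zero (G : SimpleGraph (Fin m)) {x : Fin m → ℝ}
    (h : ∀ i j, G.Adj i j → x i * x j = 0) : qA G x = 0 := by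
  refine Finset.sum_eq_zero fun i _ => Finset.sum_eq_zero fun j _ => ?_
  by_cases hij : G.Adj i j <;> simp [hij, h i j]

lemma qform_expand (M : Matrix (Fin m) (Fin m) ℝ) (hM : ∀ a b, M a b = M b a)
    (x d : Fin m → ℝ) (t : ℝ) :
    qform M (fun k => x k + t * d k)
      = qform M x + 2 * t * (d ⬝ᵥ M.mulVec x) + t ^ 2 * qform M d := by
  have hsym : ∑ a, ∑ b, x a * M a b * d b = ∑ a, ∑ b, d a * M a b * x b := by
    rw [Finset.sum_comm]
    refine Finset.sum_congr rfl fun a _ => Finset.sum_congr rfl fun b _ => ?_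
    rw [hM b a]; ring
  rw [qform_eq, qform_eq, qform_eq, dv_eq]
  have : ∀ a b, (x a + t * d a) * M a b * (x b + t * d b)
      = x a * M a b * x b + t * (d a * M a b * x b) + t * (x a * M a b * d b)
        + t ^ 2 * (d a * M a b * d b) := fun a b => by ring
  simp only [this, Finset.sum_add_distrib, ← Finset.mul_sum]
  rw [hsym]; ring

noncomputable def dd (i j : Fin m) : Fin m → ℝ :=
  fun k => (if k = i then 1 else 0) - (if k = j then 1 else 0)

lemma sum_dd (i j : Fin m) : ∑ k, dd i j k = 0 := by
  simp [dd, Finset.sum_sub_distrib]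

lemma qform_dd (M : Matrix (Fin m) (Fin m) ℝ) (i j : Fin m) :
    qform M (dd i j) = M i i - M i j - (M j i - M j j) := by
  rw [qform_eq]
  have h1 : ∀ (a : Fin m) (z : ℝ), dd i j a * z
      = (if a = i then z else 0) - (if a = j then z else 0) := by
    intro a z; unfold dd; split_ifs <;> ring
  have h2 : ∀ (a : Fin m) (z : ℝ), z * dd i j a
      = (if a = i then z else 0) - (if a = j then z else 0) := by
    intro a z; unfold dd; split_ifs <;> ring
  have : ∀ a : Fin m, ∑ b, dd i j a * M a b * dd i j b
      = dd i j a * M a i - dd i j a * M a j := by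
    intro a
    have : ∀ b, dd i j a * M a b * dd i j b
        = (if b = i then dd i j a * M a b else 0) - (if b = j then dd i j a * M a b else 0) := by
      intro b; rw [h2 b]
    simp only [this, Finset.sum_sub_distrib, Finset.sum_ite_eq', Finset.mem_univ, if_true]
  simp only [this, Finset.sum_sub_distrib]
  simp only [h1, Finset.sum_sub_distrib, Finset.sum_ite_eq', Finset.mem_univ, if_true]
  ring

noncomputable def supp (x : Fin m → ℝ) : Finset (Fin m) := Finset.univ.filter (x · ≠ 0)

lemma mem_supp {x : Fin m → ℝ} {i : Fin m} : i ∈ supp x ↔ x i ≠ 0 := by simp [supp]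

lemma step (G : SimpleGraph (Fin m)) (x : Fin m → ℝ) (hx : x ∈ stdSimplex ℝ (Fin m))
    {i j : Fin m} (hadj : G.Adj i j) (hi : x i ≠ 0) (hj : x j ≠ 0) :
    ∃ y ∈ stdSimplex ℝ (Fin m), qform (1 + G.adjMatrix ℝ) y ≤ qform (1 + G.adjMatrix ℝ) x
      ∧ (supp y).card < (supp x).card := by
  set M := (1 : Matrix (Fin m) (Fin m) ℝ) + G.adjMatrix ℝ with hMdef
  have hne : i ≠ j := G.ne_of_adj hadj
  have hMsym : ∀ a b, M a b = M b a := by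
    intro a b
    simp [hMdef, Matrix.add_apply, Matrix.one_apply, SimpleGraph.adjMatrix_apply, eq_comm,
      G.adj_comm a b]
  have hMii : M i i = 1 := by simp [hMdef, Matrix.add_apply, SimpleGraph.adjMatrix_apply]
  have hMjj : M j j = 1 := by simp [hMdef, Matrix.add_apply, SimpleGraph.adjMatrix_apply]
  have hMij : M i j = 1 := by
    simp [hMdef, Matrix.add_apply, Matrix.one_apply_ne hne, SimpleGraph.adjMatrix_apply, hadj]
  have hMji : M j i = 1 := by
    simp [hMdef, Matrix.add_apply, Matrix.one_apply_ne hne.symm, SimpleGraph.adjMatrix_apply,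
      hadj.symm]
  have hq0 : qform M (dd i j) = 0 := by rw [qform_dd, hMii, hMjj, hMij, hMji]; ring
  have hxi : 0 < x i := lt_of_le_of_ne (hx.1 i) (Ne.symm hi)
  have hxj : 0 < x j := lt_of_le_of_ne (hx.1 j) (Ne.symm hj)
  set c := dd i j ⬝ᵥ M.mulVec x with hc
  obtain ⟨t, ht1, ht2, ht3⟩ : ∃ t : ℝ, 2 * t * c ≤ 0 ∧
      ((t = -(x i)) ∨ (t = x j)) ∧ (0 ≤ t + x i ∧ 0 ≤ x j - t) := by
    rcases le_or_gt 0 c with h | h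
    · exact ⟨-(x i), by nlinarith, Or.inl rfl, by nlinarith, by nlinarith⟩
    · exact ⟨x j, by nlinarith, Or.inr rfl, by nlinarith, by nlinarith⟩
  set y : Fin m → ℝ := fun k => x k + t * dd i j k with hy
  have hyi : y i = x i + t := by simp [hy, dd, hne]
  have hyj : y j = x j - t := by simp [hy, dd, hne.symm]; ring
  have hyk : ∀ k, k ≠ i → k ≠ j → y k = x k := by
    intro k h1 h2; simp [hy, dd, h1, h2]
  have hyΔ : y ∈ stdSimplex ℝ (Fin m) := by
    constructor
    · intro k
      by_cases h1 : k = i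
      · subst h1; rw [hyi]; linarith [ht3.1]
      by_cases h2 : k = j
      · subst h2; rw [hyj]; linarith [ht3.2]
      · rw [hyk k h1 h2]; exact hx.1 k
    · have : ∑ k, y k = ∑ k, x k + t * ∑ k, dd i j k := by
        simp [hy, Finset.sum_add_distrib, Finset.mul_sum]
      rw [this, sum_dd, hx.2]; ring
  refine ⟨y, hyΔ, ?_, ?_⟩
  · rw [hy, qform_expand M hMsym, hq0]; nlinarith
  · have hsub : ∀ z ∈ supp y, z ∈ supp x := by
      intro z hz
      rw [mem_supp] at hz ⊢
      by_cases h1 : z = i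
      · subst h1; exact hi
      by_cases h2 : z = j
      · subst h2; exact hj
      · rwa [hyk z h1 h2] at hz
    rcases ht2 with h | h
    · have hyi0 : y i = 0 := by rw [hyi, h]; ring
      refine Finset.card_lt_card ⟨fun z hz => hsub z hz, fun hss => ?_⟩
      have := hss (mem_supp.2 hi)
      rw [mem_supp] at this; exact this hyi0
    · have hyj0 : y j = 0 := by rw [hyj, h]; ring
      refine Finset.card_lt_card ⟨fun z hz => hsub z hz, fun hss => ?_⟩
      have := hss (mem_supp.2 hj)
      rw [mem_supp] at this; exact this hyj0

lemma reduce (G : SimpleGraph (Fin m)) :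
    ∀ k (x : Fin m → ℝ), x ∈ stdSimplex ℝ (Fin m) → (supp x).card = k →
      ∃ y ∈ stdSimplex ℝ (Fin m), IsStable G (supp y) ∧
        qform (1 + G.adjMatrix ℝ) y ≤ qform (1 + G.adjMatrix ℝ) x := by
  intro k
  induction k using Nat.strong_induction_on with
  | _ k ih =>
    intro x hx hk
    by_cases hst : IsStable G (supp x)
    · exact ⟨x, hx, hst, le_refl _⟩
    · simp only [IsStable, not_forall] at hst
      obtain ⟨i, hi, j, hj, hadj⟩ := hst
      obtain ⟨y, hyΔ, hle, hlt⟩ := step G x hx (not_not.mp hadj) (mem_supp.1 hi) (mem_supp.1 hj)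
      rw [hk] at hlt
      obtain ⟨z, hzΔ, hzst, hzle⟩ := ih _ hlt y hyΔ rfl
      exact ⟨z, hzΔ, hzst, le_trans hzle hle⟩

lemma bdd (G : SimpleGraph (Fin m)) :
    BddAbove {k | ∃ S : Finset (Fin m), IsStable G S ∧ S.card = k} := by
  refine ⟨m, fun k hk => ?_⟩
  obtain ⟨S, _, rfl⟩ := hk
  simpa using Finset.card_le_univ S

lemma card_le_alpha {G : SimpleGraph (Fin m)} {S : Finset (Fin m)} (h : IsStable G S) :
    S.card ≤ alpha G := le_csSup (bdd G) ⟨S, h, rfl⟩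

lemma alpha_spec (G : SimpleGraph (Fin m)) :
    ∃ S : Finset (Fin m), IsStable G S ∧ S.card = alpha G := by
  have h0 : (0:ℕ) ∈ {k | ∃ S : Finset (Fin m), IsStable G S ∧ S.card = k} :=
    ⟨∅, by intro i hi; simp at hi, by simp⟩
  exact Nat.sSup_mem ⟨0, h0⟩ (bdd G)

lemma alpha_pos (G : SimpleGraph (Fin (m+1))) : 0 < alpha G := by
  have hst : IsStable G {0} := by
    intro i hi j hj
    rw [Finset.mem_singleton] at hi hj
    subst hi; subst hj
    exact G.irrefl
  have : ({0} : Finset (Fin (m+1))).card ≤ alpha G := card_le_alpha hst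
  exact Nat.lt_of_lt_of_le (by simp) this

lemma MS (G : SimpleGraph (Fin m)) (x : Fin m → ℝ) (hx : x ∈ stdSimplex ℝ (Fin m)) :
    ((alpha G : ℝ))⁻¹ ≤ qform (1 + G.adjMatrix ℝ) x := by
  obtain ⟨y, hyΔ, hyst, hyle⟩ := reduce G (supp x).card x hx rfl
  refine le_trans ?_ hyle
  rw [q_one_adj]
  have hA : qA G y = 0 := by
    refine qA_eq_zero G fun i j hij => ?_
    by_cases hyi : y i = 0
    · rw [hyi]; ring
    by_cases hyj : y j = 0
    · rw [hyj]; ring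
    · exact absurd hij (hyst i (mem_supp.2 hyi) j (mem_supp.2 hyj))
  rw [hA, add_zero]
  have hsum : ∑ i ∈ supp y, y i = 1 := by
    rw [← hyΔ.2]
    exact Finset.sum_subset (Finset.subset_univ _)
      (fun i _ hi => by simpa using (not_not.mp (by simpa [mem_supp] using hi)))
  have hsq : ∑ i, y i ^ 2 = ∑ i ∈ supp y, y i ^ 2 := by
    refine (Finset.sum_subset (Finset.subset_univ _) fun i _ hi => ?_).symm
    have : y i = 0 := not_not.mp (by simpa [mem_supp] using hi)
    simp [this]
  have hCS : (1 : ℝ) ≤ (supp y).card * ∑ i ∈ supp y, y i ^ 2 := by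
    have := sq_sum_le_card_mul_sum_sq (s := supp y) (f := y)
    rw [hsum] at this; simpa using this
  have hcardpos : 0 < ((supp y).card : ℝ) := by
    have : (supp y).Nonempty := by
      rcases Finset.eq_empty_or_nonempty (supp y) with h | h
      · exfalso; rw [h] at hsum; simp at hsum
      · exact h
    exact_mod_cast Finset.card_pos.2 this
  have hcard_le : ((supp y).card : ℝ) ≤ (alpha G : ℝ) := by exact_mod_cast card_le_alpha hyst
  have halpha_pos : (0 : ℝ) < (alpha G : ℝ) := lt_of_lt_of_le hcardpos hcard_le
  rw [hsq]
  have h1 : (1:ℝ) ≤ (alpha G) * ∑ i ∈ supp y, y i ^ 2 :=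
    calc (1:ℝ) ≤ (supp y).card * ∑ i ∈ supp y, y i ^ 2 := hCS
      _ ≤ (alpha G) * ∑ i ∈ supp y, y i ^ 2 := by
          refine mul_le_mul_of_nonneg_right hcard_le ?_
          exact Finset.sum_nonneg fun i _ => sq_nonneg _
  calc ((alpha G : ℝ))⁻¹ = ((alpha G : ℝ))⁻¹ * 1 := by ring
    _ ≤ ((alpha G : ℝ))⁻¹ * ((alpha G) * ∑ i ∈ supp y, y i ^ 2) :=
        mul_le_mul_of_nonneg_left h1 (inv_nonneg.2 halpha_pos.le)
    _ = ∑ i ∈ supp y, y i ^ 2 := by field_simp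

end Aux

section Main
variable {n : ℕ}

lemma H_adj (G : SimpleGraph (Fin (n+2))) (i j : Fin (n+2)) :
    (G.deleteEdges {s((0 : Fin (n+2)), 1)}).Adj i j ↔
      G.Adj i j ∧ ¬((i = 0 ∧ j = 1) ∨ (i = 1 ∧ j = 0)) := by
  rw [SimpleGraph.deleteEdges_adj]
  simp [Sym2.eq_iff]

lemma stable_G_of_H (G : SimpleGraph (Fin (n+2))) {S : Finset (Fin (n+2))}
    (hS : IsStable (G.deleteEdges {s((0 : Fin (n+2)), 1)}) S)
    (h0 : (0 : Fin (n+2)) ∉ S ∨ (1 : Fin (n+2)) ∉ S) : IsStable G S := by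
  intro i hi j hj hGij
  refine hS i hi j hj ?_
  rw [H_adj]
  refine ⟨hGij, ?_⟩
  rintro (⟨rfl, rfl⟩ | ⟨rfl, rfl⟩) <;> rcases h0 with h | h <;> exact h ‹_›

lemma alpha_le_alphaH (G : SimpleGraph (Fin (n+2))) :
    alpha G ≤ alpha (G.deleteEdges {s((0 : Fin (n+2)), 1)}) := by
  obtain ⟨S, hS, hcard⟩ := alpha_spec G
  rw [← hcard]
  refine card_le_alpha fun i hi j hj hH => ?_
  exact hS i hi j hj ((H_adj G i j).1 hH).1

lemma alphaH_le (G : SimpleGraph (Fin (n+2))) :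
    alpha (G.deleteEdges {s((0 : Fin (n+2)), 1)}) ≤ alpha G + 1 := by
  obtain ⟨S, hS, hcard⟩ := alpha_spec (G.deleteEdges {s((0 : Fin (n+2)), 1)})
  rw [← hcard]
  have hstab : IsStable G (S.erase 0) := by
    intro i hi j hj hGij
    rw [Finset.mem_erase] at hi hj
    refine hS i hi.2 j hj.2 ?_
    rw [H_adj]
    refine ⟨hGij, ?_⟩
    rintro (⟨rfl, rfl⟩ | ⟨rfl, rfl⟩)
    · exact hi.1 rfl
    · exact hj.1 rfl
  have h1 : S.card - 1 ≤ (S.erase 0).card := Finset.pred_card_le_card_erase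
  have h2 := card_le_alpha hstab
  omega


lemma q_split (G : SimpleGraph (Fin (n+2))) (x : Fin (n+2) → ℝ) :
    qform (1 + G.adjMatrix ℝ + (G.deleteEdges {s((0 : Fin (n+2)), 1)}).adjMatrix ℝ) x
      = qform (1 + G.adjMatrix ℝ) x + qA (G.deleteEdges {s((0 : Fin (n+2)), 1)}) x := by
  rw [q_add]; congr 1; convert q_adj (G.deleteEdges {s((0 : Fin (n+2)), 1)}) x

lemma q_triple (G : SimpleGraph (Fin (n+2))) (x : Fin (n+2) → ℝ) :
    qform (1 + G.adjMatrix ℝ + (G.deleteEdges {s((0 : Fin (n+2)), 1)}).adjMatrix ℝ) x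
      = (∑ i, x i ^ 2) + qA G x + qA (G.deleteEdges {s((0 : Fin (n+2)), 1)}) x := by
  rw [q_split, q_add, q_one, q_adj]

lemma qA_H_zero (G : SimpleGraph (Fin (n+2))) {S : Finset (Fin (n+2))} {x : Fin (n+2) → ℝ}
    (hS : IsStable (G.deleteEdges {s((0 : Fin (n+2)), 1)}) S)
    (hsupp : ∀ i, x i ≠ 0 → i ∈ S) :
    qA (G.deleteEdges {s((0 : Fin (n+2)), 1)}) x = 0 := by
  refine qA_eq_zero _ fun i j hij => ?_
  by_cases hxi : x i = 0
  · rw [hxi]; ring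
  by_cases hxj : x j = 0
  · rw [hxj]; ring
  exact absurd hij (hS i (hsupp i hxi) j (hsupp j hxj))

lemma qA_G_eval (G : SimpleGraph (Fin (n+2))) (hadj : G.Adj 0 1)
    {S : Finset (Fin (n+2))} {x : Fin (n+2) → ℝ}
    (hS : IsStable (G.deleteEdges {s((0 : Fin (n+2)), 1)}) S)
    (hsupp : ∀ i, x i ≠ 0 → i ∈ S) :
    qA G x = x 0 * x 1 + x 1 * x 0 := by
  have key : ∀ i j : Fin (n+2), (if G.Adj i j then x i * x j else 0)
      = (if i = 0 ∧ j = 1 then x i * x j else 0) + (if i = 1 ∧ j = 0 then x i * x j else 0) := by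
    intro i j
    have hne01 : (0 : Fin (n+2)) ≠ 1 := G.ne_of_adj hadj
    by_cases hij : G.Adj i j
    · rw [if_pos hij]
      by_cases hxi : x i = 0
      · rw [hxi]
        split_ifs <;> ring
      by_cases hxj : x j = 0
      · rw [hxj]
        split_ifs <;> ring
      · have hmem : ¬ (G.deleteEdges {s((0 : Fin (n+2)), 1)}).Adj i j :=
          hS i (hsupp i hxi) j (hsupp j hxj)
        rw [H_adj] at hmem
        push_neg at hmem
        rcases hmem hij with (⟨rfl, rfl⟩ | ⟨rfl, rfl⟩)
        · rw [if_pos ⟨rfl, rfl⟩, if_neg (by rintro ⟨h1, -⟩; exact hne01 h1)]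
          ring
        · rw [if_neg (by rintro ⟨h1, -⟩; exact hne01 h1.symm), if_pos ⟨rfl, rfl⟩]
          ring
    · rw [if_neg hij, if_neg, if_neg]
      · ring
      · rintro ⟨rfl, rfl⟩; exact hij hadj.symm
      · rintro ⟨rfl, rfl⟩; exact hij hadj
  rw [qA]
  simp only [key, Finset.sum_add_distrib]
  congr 1
  · have inner : ∀ i : Fin (n+2), (∑ j, if i = 0 ∧ j = 1 then x i * x j else 0)
        = if i = 0 then x i * x 1 else 0 := by
      intro i
      by_cases h : i = 0
      · simp [h]
      · simp [h]
    simp only [inner, Finset.sum_ite_eq', Finset.mem_univ, if_true]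
  · have inner : ∀ i : Fin (n+2), (∑ j, if i = 1 ∧ j = 0 then x i * x j else 0)
        = if i = 1 then x i * x 0 else 0 := by
      intro i
      by_cases h : i = 1
      · simp [h]
      · simp [h]
    simp only [inner, Finset.sum_ite_eq', Finset.mem_univ, if_true]


lemma stable_H_of_G (G : SimpleGraph (Fin (n+2))) {S : Finset (Fin (n+2))}
    (hS : IsStable G S) : IsStable (G.deleteEdges {s((0 : Fin (n+2)), 1)}) S :=
  fun i hi j hj hH => hS i hi j hj ((H_adj G i j).1 hH).1

lemma sum_indicator (S : Finset (Fin (n+2))) (c : ℝ) :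
    ∑ i, (if i ∈ S then c else 0) = S.card * c := by
  rw [Finset.sum_ite_mem]
  simp [Finset.univ_inter, Finset.sum_const, nsmul_eq_mul]

lemma uniform_val (G : SimpleGraph (Fin (n+2))) (hadj : G.Adj 0 1)
    {S : Finset (Fin (n+2))} (hS : IsStable G S) (hcard : S.card = alpha G) :
    (fun i => if i ∈ S then ((alpha G : ℝ))⁻¹ else 0) ∈ stdSimplex ℝ (Fin (n+2)) ∧
    qform (1 + G.adjMatrix ℝ + (G.deleteEdges {s((0 : Fin (n+2)), 1)}).adjMatrix ℝ)
      (fun i => if i ∈ S then ((alpha G : ℝ))⁻¹ else 0) = ((alpha G : ℝ))⁻¹ := by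
  set a : ℝ := (alpha G : ℝ) with ha
  have hapos : (0:ℝ) < a := by
    rw [ha]; exact_mod_cast alpha_pos G
  set u : Fin (n+2) → ℝ := fun i => if i ∈ S then a⁻¹ else 0 with hu
  have hsupp : ∀ i, u i ≠ 0 → i ∈ S := by
    intro i hi
    by_contra h
    exact hi (by simp [hu, h])
  have hmem : u ∈ stdSimplex ℝ (Fin (n+2)) := by
    constructor
    · intro i; rw [hu]; dsimp only; split_ifs <;> positivity
    · rw [hu]; dsimp only
      rw [sum_indicator, hcard]
      field_simp
      exact ha.symm
  refine ⟨hmem, ?_⟩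
  rw [q_triple, qA_H_zero G (stable_H_of_G G hS) hsupp,
    qA_G_eval G hadj (stable_H_of_G G hS) hsupp]
  have h01 : u 0 * u 1 = 0 := by
    by_cases h0 : (0 : Fin (n+2)) ∈ S
    · by_cases h1 : (1 : Fin (n+2)) ∈ S
      · exact absurd hadj (hS 0 h0 1 h1)
      · simp [hu, h1]
    · simp [hu, h0]
  have hsq : ∑ i, u i ^ 2 = S.card * (a⁻¹)^2 := by
    have hpt : ∀ i ∈ Finset.univ, u i ^ 2 = if i ∈ S then (a⁻¹)^2 else 0 := by
      intro i _; rw [hu]; dsimp only; split_ifs <;> simp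
    rw [Finset.sum_congr rfl hpt, sum_indicator]
  have hc : (S.card : ℝ) = a := by rw [ha, hcard]
  rw [hsq, hc, h01, mul_comm (u 1) (u 0), h01]
  field_simp
  ring

lemma const_on_supp {T : Finset (Fin (n+2))} {x : Fin (n+2) → ℝ}
    (hsum : ∑ i ∈ T, x i = 1) (hTpos : 0 < T.card)
    (hsq : ∑ i ∈ T, x i ^ 2 ≤ ((T.card : ℝ))⁻¹) :
    ∀ i ∈ T, x i = ((T.card : ℝ))⁻¹ := by
  set k : ℝ := (T.card : ℝ) with hk
  have hkpos : (0:ℝ) < k := by rw [hk]; exact_mod_cast hTpos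
  have key : ∑ i ∈ T, (x i - k⁻¹)^2 ≤ 0 := by
    have expand : ∀ i ∈ T, (x i - k⁻¹)^2 = x i ^ 2 - 2 * k⁻¹ * x i + k⁻¹ ^ 2 :=
      fun i _ => by ring
    rw [Finset.sum_congr rfl expand, Finset.sum_add_distrib, Finset.sum_sub_distrib,
      ← Finset.mul_sum, hsum, Finset.sum_const, nsmul_eq_mul, ← hk]
    have hkk : k * k⁻¹ ^ 2 = k⁻¹ := by field_simp
    nlinarith [hsq]
  intro i hi
  have hzero : ∑ i ∈ T, (x i - k⁻¹)^2 = 0 :=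
    le_antisymm key (Finset.sum_nonneg fun j _ => sq_nonneg _)
  have hterm := (Finset.sum_eq_zero_iff_of_nonneg (fun j _ => sq_nonneg _)).1 hzero i hi
  have := pow_eq_zero_iff (n := 2) (by norm_num) |>.1 hterm
  linarith [sub_eq_zero.1 this]


lemma lower_bound (G : SimpleGraph (Fin (n+2))) (y : Fin (n+2) → ℝ)
    (hy : y ∈ stdSimplex ℝ (Fin (n+2))) :
    ((alpha G : ℝ))⁻¹ ≤
      qform (1 + G.adjMatrix ℝ + (G.deleteEdges {s((0 : Fin (n+2)), 1)}).adjMatrix ℝ) y := by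
  rw [q_split]
  have h1 := MS G y hy
  have h2 := qA_nonneg (G.deleteEdges {s((0 : Fin (n+2)), 1)}) hy.1
  linarith

lemma crit_infinite (G : SimpleGraph (Fin (n+2))) (hadj : G.Adj 0 1)
    (hcrit : alpha (G.deleteEdges {s((0 : Fin (n+2)), 1)}) = alpha G + 1) :
    (globMin (qform (1 + G.adjMatrix ℝ +
        (G.deleteEdges {s((0 : Fin (n+2)), 1)}).adjMatrix ℝ))).Infinite := by
  obtain ⟨S, hS, hcard⟩ := alpha_spec (G.deleteEdges {s((0 : Fin (n+2)), 1)})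
  rw [hcrit] at hcard
  have hne01 : (0 : Fin (n+2)) ≠ 1 := G.ne_of_adj hadj
  have h0 : (0 : Fin (n+2)) ∈ S := by
    by_contra h
    have := card_le_alpha (stable_G_of_H G hS (Or.inl h))
    omega
  have h1 : (1 : Fin (n+2)) ∈ S := by
    by_contra h
    have := card_le_alpha (stable_G_of_H G hS (Or.inr h))
    omega
  set T : Finset (Fin (n+2)) := (S.erase 0).erase 1 with hT
  have h0T : (0 : Fin (n+2)) ∉ T := by simp [hT]
  have h1T : (1 : Fin (n+2)) ∉ T := by simp [hT]
  have hTsub : T ⊆ S := (Finset.erase_subset _ _).trans (Finset.erase_subset _ _)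
  have hapos' : 0 < alpha G := alpha_pos G
  set a : ℝ := (alpha G : ℝ) with ha
  have hapos : (0:ℝ) < a := by rw [ha]; exact_mod_cast hapos'
  have hTcard : (T.card : ℝ) = a - 1 := by
    have e1 : (S.erase 0).card = alpha G := by
      rw [Finset.card_erase_of_mem h0, hcard]
      omega
    have e2 : T.card = alpha G - 1 := by
      rw [hT, Finset.card_erase_of_mem (Finset.mem_erase.2 ⟨hne01.symm, h1⟩), e1]
    rw [e2, ha, Nat.cast_sub hapos']
    simp
  set φ : ℝ → (Fin (n+2) → ℝ) := fun s i =>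
    s * (if i = 0 then 1 else 0) + (a⁻¹ - s) * (if i = 1 then 1 else 0)
      + a⁻¹ * (if i ∈ T then 1 else 0) with hφ
  have hφ0 : ∀ s, φ s 0 = s := by intro s; simp [hφ, hne01, h0T]
  have hφ1 : ∀ s, φ s 1 = a⁻¹ - s := by intro s; simp [hφ, hne01.symm, h1T]
  have hφsupp : ∀ s i, φ s i ≠ 0 → i ∈ S := by
    intro s i hi
    by_contra h
    have hi0 : i ≠ 0 := fun e => h (e ▸ h0)
    have hi1 : i ≠ 1 := fun e => h (e ▸ h1)
    have hiT : i ∉ T := fun e => h (hTsub e)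
    exact hi (by simp [hφ, hi0, hi1, hiT])
  have hsum : ∀ s, ∑ i, φ s i = 1 := by
    intro s
    rw [hφ]
    dsimp only
    rw [Finset.sum_add_distrib, Finset.sum_add_distrib, ← Finset.mul_sum, ← Finset.mul_sum,
      ← Finset.mul_sum]
    rw [Finset.sum_ite_eq' Finset.univ (0 : Fin (n+2)) (fun _ => (1:ℝ)),
      Finset.sum_ite_eq' Finset.univ (1 : Fin (n+2)) (fun _ => (1:ℝ)), sum_indicator]
    simp only [Finset.mem_univ, if_true]
    rw [hTcard]
    field_simp
    ring
  have hmem : ∀ s, s ∈ Set.Icc (0:ℝ) a⁻¹ → φ s ∈ stdSimplex ℝ (Fin (n+2)) := by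
    intro s hs
    obtain ⟨hs0, hs1⟩ := hs
    refine ⟨fun i => ?_, hsum s⟩
    rw [hφ]
    dsimp only
    have h1 : (0:ℝ) ≤ a⁻¹ - s := by linarith
    have h2 : (0:ℝ) ≤ a⁻¹ := by positivity
    split_ifs <;> nlinarith
  have hval : ∀ s, s ∈ Set.Icc (0:ℝ) a⁻¹ →
      qform (1 + G.adjMatrix ℝ + (G.deleteEdges {s((0 : Fin (n+2)), 1)}).adjMatrix ℝ) (φ s)
        = a⁻¹ := by
    intro s _
    rw [q_triple, qA_H_zero G hS (hφsupp s), qA_G_eval G hadj hS (hφsupp s), hφ0, hφ1]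
    have hpt : ∀ i ∈ (Finset.univ : Finset (Fin (n+2))), (φ s i)^2
        = s^2 * (if i = 0 then 1 else 0) + (a⁻¹ - s)^2 * (if i = 1 then 1 else 0)
          + (a⁻¹)^2 * (if i ∈ T then 1 else 0) := by
      intro i _
      by_cases hi0 : i = 0
      · subst hi0; simp [hφ, hne01, h0T]
      by_cases hi1 : i = 1
      · subst hi1; simp [hφ, hne01.symm, h1T]
      by_cases hiT : i ∈ T
      · simp [hφ, hi0, hi1, hiT]
      · simp [hφ, hi0, hi1, hiT]
    rw [Finset.sum_congr rfl hpt]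
    rw [Finset.sum_add_distrib, Finset.sum_add_distrib, ← Finset.mul_sum, ← Finset.mul_sum,
      ← Finset.mul_sum]
    rw [Finset.sum_ite_eq' Finset.univ (0 : Fin (n+2)) (fun _ => (1:ℝ)),
      Finset.sum_ite_eq' Finset.univ (1 : Fin (n+2)) (fun _ => (1:ℝ)), sum_indicator]
    simp only [Finset.mem_univ, if_true]
    rw [hTcard]
    field_simp
    try ring
    try exact Or.inl trivial
  have hsub : φ '' (Set.Icc (0:ℝ) a⁻¹) ⊆
      globMin (qform (1 + G.adjMatrix ℝ +
        (G.deleteEdges {s((0 : Fin (n+2)), 1)}).adjMatrix ℝ)) := by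
    rintro x ⟨s, hs, rfl⟩
    refine ⟨hmem s hs, fun y hy => ?_⟩
    rw [hval s hs]
    exact lower_bound G y hy
  have hinj : Set.InjOn φ (Set.Icc (0:ℝ) a⁻¹) := by
    intro s _ t _ hst
    have := congrFun hst 0
    rwa [hφ0, hφ0] at this
  have hIccInf : (Set.Icc (0:ℝ) a⁻¹).Infinite := Set.Icc_infinite (by positivity)
  exact Set.Infinite.mono hsub (hIccInf.image hinj)


lemma noncrit_finite (G : SimpleGraph (Fin (n+2))) (hadj : G.Adj 0 1)
    (hnc : ¬ alpha (G.deleteEdges {s((0 : Fin (n+2)), 1)}) = alpha G + 1) :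
    ¬ (globMin (qform (1 + G.adjMatrix ℝ +
        (G.deleteEdges {s((0 : Fin (n+2)), 1)}).adjMatrix ℝ))).Infinite := by
  have hHG : alpha (G.deleteEdges {s((0 : Fin (n+2)), 1)}) = alpha G := by
    have := alpha_le_alphaH G
    have := alphaH_le G
    omega
  set H := G.deleteEdges {s((0 : Fin (n+2)), 1)} with hH
  set a : ℝ := (alpha G : ℝ) with ha
  have hapos : (0:ℝ) < a := by rw [ha]; exact_mod_cast alpha_pos G
  rw [Set.not_infinite]
  obtain ⟨Smax, hSmax, hScard⟩ := alpha_spec G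
  obtain ⟨humem, huval⟩ := uniform_val G hadj hSmax hScard
  set ψ : Finset (Fin (n+2)) → (Fin (n+2) → ℝ) :=
    fun S i => if i ∈ S then ((S.card : ℝ))⁻¹ else 0 with hψ
  refine Set.Finite.subset (Set.finite_range ψ) ?_
  rintro x ⟨hxΔ, hxmin⟩
  -- the minimum value is a⁻¹
  have hub : qform (1 + G.adjMatrix ℝ + H.adjMatrix ℝ) x ≤ a⁻¹ := by
    have := hxmin _ humem
    rwa [huval] at this
  have hlb := MS G x hxΔ
  have hAH : qA H x = 0 := by
    have h2 := qA_nonneg H hxΔ.1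
    have hsplit : qform (1 + G.adjMatrix ℝ + H.adjMatrix ℝ) x
        = qform (1 + G.adjMatrix ℝ) x + qA H x := q_split G x
    linarith [hub, hlb, h2, hsplit]
  have hterm : ∀ i j, H.Adj i j → x i * x j = 0 := by
    intro i j hij
    rw [qA] at hAH
    have h1 : ∀ p ∈ (Finset.univ : Finset (Fin (n+2))),
        (0:ℝ) ≤ ∑ q, if H.Adj p q then x p * x q else 0 := by
      intro p _
      refine Finset.sum_nonneg fun q _ => ?_
      by_cases h : H.Adj p q <;> simp [h]
      exact mul_nonneg (hxΔ.1 p) (hxΔ.1 q)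
    have h2 := (Finset.sum_eq_zero_iff_of_nonneg h1).1 (by convert hAH) i (Finset.mem_univ i)
    have h3 : ∀ q ∈ (Finset.univ : Finset (Fin (n+2))),
        (0:ℝ) ≤ if H.Adj i q then x i * x q else 0 := by
      intro q _
      by_cases h : H.Adj i q <;> simp [h]
      exact mul_nonneg (hxΔ.1 i) (hxΔ.1 q)
    have h4 := (Finset.sum_eq_zero_iff_of_nonneg h3).1 h2 j (Finset.mem_univ j)
    rwa [if_pos hij] at h4
  have hstable : IsStable H (supp x) := by
    intro i hi j hj hij
    exact mul_ne_zero (mem_supp.1 hi) (mem_supp.1 hj) (hterm i j hij)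
  have hk : (supp x).card ≤ alpha G := by
    have := card_le_alpha hstable
    omega
  have hsumT : ∑ i ∈ supp x, x i = 1 := by
    rw [← hxΔ.2]
    exact Finset.sum_subset (Finset.subset_univ _)
      (fun i _ hi => not_not.mp (by simpa [mem_supp] using hi))
  have hkpos : 0 < (supp x).card := by
    rcases Finset.eq_empty_or_nonempty (supp x) with h | h
    · exfalso; rw [h] at hsumT; simp at hsumT
    · exact Finset.card_pos.2 h
  have hAG : 0 ≤ qA G x := qA_nonneg G hxΔ.1
  have hsq : ∑ i ∈ supp x, x i ^ 2 ≤ (((supp x).card : ℝ))⁻¹ := by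
    have htr : qform (1 + G.adjMatrix ℝ + H.adjMatrix ℝ) x
        = (∑ i, x i ^ 2) + qA G x + qA H x := q_triple G x
    have h5 : ∑ i, x i ^ 2 ≤ a⁻¹ := by linarith [hub, htr, hAG, hAH.ge, hAH.le]
    have h6 : ∑ i ∈ supp x, x i ^ 2 = ∑ i, x i ^ 2 := by
      refine Finset.sum_subset (Finset.subset_univ _) fun i _ hi => ?_
      have : x i = 0 := not_not.mp (by simpa [mem_supp] using hi)
      simp [this]
    have h7 : a⁻¹ ≤ (((supp x).card : ℝ))⁻¹ := by
      apply inv_anti₀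
      · exact_mod_cast hkpos
      · rw [ha]; exact_mod_cast hk
    linarith [h5, h6.le, h6.ge]
  have hconst := const_on_supp hsumT hkpos hsq
  refine ⟨supp x, ?_⟩
  funext i
  rw [hψ]
  dsimp only
  by_cases hi : i ∈ supp x
  · rw [if_pos hi, hconst i hi]
  · rw [if_neg hi]
    have h0 : x i = 0 := not_not.mp (by simpa [mem_supp] using hi)
    exact h0.symm

end Main

theorem stmt_19 (n : ℕ) (G : SimpleGraph (Fin (n+2))) (hadj : G.Adj 0 1) :
    (globMin (qform (1 + G.adjMatrix ℝ +
        (G.deleteEdges {s((0 : Fin (n+2)), 1)}).adjMatrix ℝ))).Infinite ↔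
      alpha (G.deleteEdges {s((0 : Fin (n+2)), 1)}) = alpha G + 1 := by
  constructor
  · intro hinf
    by_contra hnc
    exact noncrit_finite G hadj hnc hinf
  · exact crit_infinite G hadj
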